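/- If L is a regular language over the push-pop alphabet Σ, then zip(poppush(filter(pushpop(L)))) is a regular language over the zipped alphabet. -/

import Mathlib

/-- The push-pop alphabet `Σ = {push v, pop v | v ∈ V}`:
`Sum.inl v` is `push v`, `Sum.inr v` is `pop v`. -/
abbrev Alph (V : Type) : Type := V ⊕ V

/-- The letter `push v`. -/
def pushSym {V : Type} (v : V) : Alph V := Sum.inl v

/-- The letter `pop v`. -/
def popSym {V : Type} (v : V) : Alph V := Sum.inr v

/-- `pushpop(L)`: the least language containing `L` closed under the rule
"if `x · push v · pop v · y ∈ pushpop(L)` then `x · y ∈ pushpop(L)`". -/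
inductive PushPop {V : Type} (L : Language (Alph V)) : List (Alph V) → Prop
  | base {x : List (Alph V)} : x ∈ L → PushPop L x
  | step {x y : List (Alph V)} {v : V} :
      PushPop L (x ++ pushSym v :: popSym v :: y) → PushPop L (x ++ y)

/-- `pushpop(L)` as a language. -/
def pushpopCl {V : Type} (L : Language (Alph V)) : Language (Alph V) := {x | PushPop L x}

/-- `L_{pop*push*}`: words in which no pop occurs after a push, i.e. a block of pops
followed by a block of pushes. -/
def PopsThenPushes {V : Type} : Language (Alph V) :=
  {w | ∃ p q : List V, w = p.map popSym ++ q.map pushSym}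

/-- `filter(L) := L ∩ L_{pop*push*}`. -/
def filterL {V : Type} (L : Language (Alph V)) : Language (Alph V) :=
  {w | w ∈ L ∧ w ∈ PopsThenPushes}

/-- `poppush(L)`: the least language containing `L` closed under the rule
"if `x · y ∈ poppush(L)` with `x` all pops and `y` all pushes, then
`x · pop v · push v · y ∈ poppush(L)` for every `v`". -/
inductive PopPush {V : Type} (L : Language (Alph V)) : List (Alph V) → Prop
  | base {x : List (Alph V)} : x ∈ L → PopPush L x
  | step {p q : List V} {v : V} :
      PopPush L (p.map popSym ++ q.map pushSym) →
      PopPush L (p.map popSym ++ popSym v :: pushSym v :: q.map pushSym)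

/-- `poppush(L)` as a language. -/
def poppushCl {V : Type} (L : Language (Alph V)) : Language (Alph V) := {x | PopPush L x}

/-- The zipped alphabet: pairs whose first component is a pop symbol or `done` (`none`)
and whose second component is a push symbol or `done` (`none`). -/
abbrev ZAlph (V : Type) : Type := Option V × Option V

/-- Zip together a list of pop values (innermost, i.e. last, pop first) with a list of
push values (first push first), padding with `done` (`none`). -/
def zipAux {V : Type} : List V → List V → List (ZAlph V)
  | [], [] => []
  | v :: p, [] => (some v, none) :: zipAux p []
  | [], w :: q => (none, some w) :: zipAux [] q
  | v :: p, w :: q => (some v, some w) :: zipAux p q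

/-- Read off the maximal prefix of pop letters, returning the popped values in order
together with the remaining suffix. -/
def takePops {V : Type} : List (Alph V) → List V × List (Alph V)
  | Sum.inr v :: r => ((takePops r).1.cons v, (takePops r).2)
  | w => ([], w)

/-- If the word consists only of push letters, return their values in order; else `none`. -/
def asPushes {V : Type} : List (Alph V) → Option (List V)
  | [] => some []
  | Sum.inl v :: r => (asPushes r).map (v :: ·)
  | Sum.inr _ :: _ => none

/-- `zip`: the partial function on `Σ*` defined only on words of the form pops-then-pushes,
pairing the last pop with the first push, and so on outwards, padding with `done`. -/
def zipWord {V : Type} (w : List (Alph V)) : Option (List (ZAlph V)) :=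
  (asPushes (takePops w).2).map fun q => zipAux (takePops w).1.reverse q

/-- `zip(L) := { zip(x) | x ∈ L, zip(x) defined }`. -/
def zipLang {V : Type} (L : Language (Alph V)) : Language (ZAlph V) :=
  {z | ∃ w ∈ L, zipWord w = some z}

/-! ### Auxiliary development -/

section AuxNFA

variable {α : Type*} {σ : Type*} (N : NFA α σ)

theorem NFA.stepSet_mono' {S T : Set σ} (h : S ⊆ T) (a : α) :
    N.stepSet S a ⊆ N.stepSet T a := by
  intro t ht
  rw [NFA.mem_stepSet] at ht ⊢
  obtain ⟨s, hs, hst⟩ := ht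
  exact ⟨s, h hs, hst⟩

theorem NFA.evalFrom_mono' {S T : Set σ} (h : S ⊆ T) (z : List α) :
    N.evalFrom S z ⊆ N.evalFrom T z := by
  induction z generalizing S T with
  | nil => exact h
  | cons a z ih => exact ih (N.stepSet_mono' h a)

theorem NFA.evalFrom_cons' (S : Set σ) (a : α) (z : List α) :
    N.evalFrom S (a :: z) = N.evalFrom (N.stepSet S a) z := rfl

theorem NFA.evalFrom_append' (S : Set σ) (x y : List α) :
    N.evalFrom S (x ++ y) = N.evalFrom (N.evalFrom S x) y := by
  simp [NFA.evalFrom, List.foldl_append]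

theorem NFA.mem_evalFrom_iff' {t : σ} {S : Set σ} {z : List α} :
    t ∈ N.evalFrom S z ↔ ∃ s ∈ S, t ∈ N.evalFrom {s} z := by
  induction z generalizing S with
  | nil => simp [NFA.evalFrom_nil]
  | cons a z ih =>
    rw [NFA.evalFrom_cons', ih]
    constructor
    · rintro ⟨s1, hs1, ht⟩
      rw [NFA.mem_stepSet] at hs1
      obtain ⟨s, hs, hstep⟩ := hs1
      refine ⟨s, hs, ?_⟩
      rw [NFA.evalFrom_cons']
      refine N.evalFrom_mono' ?_ z ht
      intro u hu
      rw [NFA.mem_stepSet]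
      exact ⟨s, rfl, Set.mem_singleton_iff.mp hu ▸ hstep⟩
    · rintro ⟨s, hs, ht⟩
      rw [NFA.evalFrom_cons', ih] at ht
      obtain ⟨s1, hs1, ht⟩ := ht
      rw [NFA.mem_stepSet] at hs1
      obtain ⟨s', hs', hstep⟩ := hs1
      refine ⟨s1, ?_, ht⟩
      rw [NFA.mem_stepSet]
      exact ⟨s, hs, Set.mem_singleton_iff.mp hs' ▸ hstep⟩

theorem NFA.step_compose' {s s' t : σ} {S : Set σ} {a : α} {z : List α}
    (hs : s ∈ S) (h1 : s' ∈ N.step s a) (h2 : t ∈ N.evalFrom {s'} z) :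
    t ∈ N.evalFrom S (a :: z) := by
  rw [NFA.evalFrom_cons']
  refine N.evalFrom_mono' ?_ z h2
  intro u hu
  rw [NFA.mem_stepSet]
  exact ⟨s, hs, Set.mem_singleton_iff.mp hu ▸ h1⟩

end AuxNFA

section Red

variable {V : Type}

/-- `Red w x`: `w` reduces to `x` by deleting adjacent `push v, pop v` pairs. -/
def Red (w x : List (Alph V)) : Prop := PushPop {w} x

theorem Red.refl (w : List (Alph V)) : Red w w := PushPop.base rfl

theorem Red.trans {w x y : List (Alph V)} (h1 : Red w x) (h2 : Red x y) : Red w y := by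
  induction h2 with
  | base h => exact (Set.mem_singleton_iff.mp h) ▸ h1
  | step _ ih => exact PushPop.step ih

theorem Red.context {w x : List (Alph V)} (u t : List (Alph V)) (h : Red w x) :
    Red (u ++ w ++ t) (u ++ x ++ t) := by
  induction h with
  | base h =>
    rw [Set.mem_singleton_iff.mp h]
    exact Red.refl _
  | @step a b v _ ih =>
    have h1 : Red (u ++ w ++ t) ((u ++ a) ++ pushSym v :: popSym v :: (b ++ t)) := by
      have : u ++ (a ++ pushSym v :: popSym v :: b) ++ t
          = (u ++ a) ++ pushSym v :: popSym v :: (b ++ t) := by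
        simp [List.append_assoc]
      exact this ▸ ih
    have h2 := PushPop.step h1
    have : (u ++ a) ++ (b ++ t) = u ++ (a ++ b) ++ t := by simp [List.append_assoc]
    exact this ▸ h2

/-- `Null d`: `d` reduces to the empty word. -/
def Null (d : List (Alph V)) : Prop := Red d []

theorem Null.nil : Null ([] : List (Alph V)) := Red.refl []

theorem Red.null_prefix {d : List (Alph V)} (h : Null d) (w : List (Alph V)) :
    Red (d ++ w) w := by
  have := Red.context [] w h
  simpa using this

theorem Null.append {d1 d2 : List (Alph V)} (h1 : Null d1) (h2 : Null d2) :
    Null (d1 ++ d2) :=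
  (Red.null_prefix h1 d2).trans h2

theorem Null.wrap {d1 d2 d3 : List (Alph V)} (v : V)
    (h1 : Null d1) (h2 : Null d2) (h3 : Null d3) :
    Null (d1 ++ pushSym v :: (d2 ++ popSym v :: d3)) := by
  have step1 : Red (d1 ++ pushSym v :: (d2 ++ popSym v :: d3))
      (d1 ++ pushSym v :: popSym v :: d3) := by
    have := Red.context (d1 ++ [pushSym v]) (popSym v :: d3) h2
    simpa [List.append_assoc] using this
  have step2 : Red (d1 ++ pushSym v :: (d2 ++ popSym v :: d3)) (d1 ++ d3) :=
    PushPop.step step1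
  exact step2.trans (h1.append h3)

theorem mem_pushpopCl_iff {L : Language (Alph V)} {x : List (Alph V)} :
    x ∈ pushpopCl L ↔ ∃ w ∈ L, Red w x := by
  constructor
  · intro h
    induction h with
    | @base w hw => exact ⟨w, hw, Red.refl w⟩
    | step _ ih =>
      obtain ⟨w, hw, hr⟩ := ih
      exact ⟨w, hw, PushPop.step hr⟩
  · rintro ⟨w, hw, hr⟩
    induction hr with
    | base h => exact (Set.mem_singleton_iff.mp h) ▸ PushPop.base hw
    | step _ ih => exact PushPop.step ih

end Red

section PushPopNFA

variable {V : Type} {σ : Type} (M : DFA (Alph V) σ)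

/-- `CRel M q q'`: `q'` is reachable from `q` by reading some null word. -/
def CRel (q q' : σ) : Prop := ∃ d, Null d ∧ M.evalFrom q d = q'

theorem CRel.refl' (q : σ) : CRel M q q := ⟨[], Null.nil, rfl⟩

theorem CRel.trans' {q1 q2 q3 : σ} (h1 : CRel M q1 q2) (h2 : CRel M q2 q3) :
    CRel M q1 q3 := by
  obtain ⟨d1, hn1, he1⟩ := h1
  obtain ⟨d2, hn2, he2⟩ := h2
  exact ⟨d1 ++ d2, hn1.append hn2, by rw [DFA.evalFrom_of_append, he1, he2]⟩

theorem CRel.key {q q1 q2 q3 : σ} {v : V} (h1 : CRel M q q1)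
    (h2 : CRel M (M.step q1 (pushSym v)) q2) (h3 : CRel M (M.step q2 (popSym v)) q3) :
    CRel M q q3 := by
  obtain ⟨d1, hn1, he1⟩ := h1
  obtain ⟨d2, hn2, he2⟩ := h2
  obtain ⟨d3, hn3, he3⟩ := h3
  refine ⟨d1 ++ pushSym v :: (d2 ++ popSym v :: d3), Null.wrap v hn1 hn2 hn3, ?_⟩
  have e1 : M.evalFrom q (d1 ++ pushSym v :: (d2 ++ popSym v :: d3))
      = M.evalFrom (M.step (M.evalFrom q d1) (pushSym v)) (d2 ++ popSym v :: d3) := by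
    rw [DFA.evalFrom_of_append]; rfl
  rw [e1, he1, DFA.evalFrom_of_append, he2]
  show M.evalFrom (M.step q2 (popSym v)) d3 = q3
  rw [he3]

/-- The NFA accepting `pushpopCl M.accepts`. -/
def ppNFA : NFA (Alph V) σ where
  step q a := {q' | CRel M (M.step q a) q'}
  start := {q | CRel M M.start q}
  accept := M.accept

/-- A set closed under `CRel`. -/
def CClosed (S : Set σ) : Prop := ∀ q ∈ S, ∀ q', CRel M q q' → q' ∈ S

theorem ppNFA_stepSet_closed (S : Set σ) (a : Alph V) :
    CClosed M ((ppNFA M).stepSet S a) := by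
  intro q hq q' hqq'
  rw [NFA.mem_stepSet] at hq ⊢
  obtain ⟨s, hs, hstep⟩ := hq
  exact ⟨s, hs, CRel.trans' M hstep hqq'⟩

theorem ppNFA_evalFrom_closed {S : Set σ} (hS : CClosed M S) (x : List (Alph V)) :
    CClosed M ((ppNFA M).evalFrom S x) := by
  induction x generalizing S with
  | nil => exact hS
  | cons a x ih =>
    rw [NFA.evalFrom_cons']
    exact ih (ppNFA_stepSet_closed M S a)

theorem ppNFA_evalFrom_sound {x : List (Alph V)} {S : Set σ} {q : σ}
    (h : q ∈ (ppNFA M).evalFrom S x) :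
    ∃ q0 ∈ S, ∃ w, M.evalFrom q0 w = q ∧ Red w x := by
  induction x generalizing S with
  | nil => exact ⟨q, h, [], rfl, Red.refl []⟩
  | cons a x ih =>
    rw [NFA.evalFrom_cons'] at h
    obtain ⟨q1, hq1, w, hw, hr⟩ := ih h
    rw [NFA.mem_stepSet] at hq1
    obtain ⟨q0, hq0, hstep⟩ := hq1
    obtain ⟨d, hd, he⟩ := hstep
    refine ⟨q0, hq0, a :: (d ++ w), ?_, ?_⟩
    · show M.evalFrom (M.step q0 a) (d ++ w) = q
      rw [DFA.evalFrom_of_append, he, hw]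
    · have h1 : Red (d ++ w) x := (Red.null_prefix hd w).trans hr
      have h2 := Red.context [a] [] h1
      simpa using h2

theorem ppNFA_evalFrom_complete (x : List (Alph V)) {S : Set σ} {q0 : σ} (hq0 : q0 ∈ S) :
    M.evalFrom q0 x ∈ (ppNFA M).evalFrom S x := by
  induction x generalizing S q0 with
  | nil => exact hq0
  | cons a x ih =>
    rw [NFA.evalFrom_cons']
    refine ih (q0 := M.step q0 a) ?_
    rw [NFA.mem_stepSet]
    exact ⟨q0, hq0, CRel.refl' M _⟩

theorem ppNFA_accepts_red_closed {w x : List (Alph V)} (hw : w ∈ (ppNFA M).accepts)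
    (hr : Red w x) : x ∈ (ppNFA M).accepts := by
  induction hr with
  | base h => exact (Set.mem_singleton_iff.mp h) ▸ hw
  | @step a b v h ih =>
    obtain ⟨q, hq, hqe⟩ := ih
    refine ⟨q, hq, ?_⟩
    have key : (ppNFA M).stepSet ((ppNFA M).stepSet ((ppNFA M).eval a) (pushSym v))
        (popSym v) ⊆ (ppNFA M).eval a := by
      intro q2 hq2
      rw [NFA.mem_stepSet] at hq2
      obtain ⟨q1, hq1, hc2⟩ := hq2
      rw [NFA.mem_stepSet] at hq1
      obtain ⟨q0, hq0, hc1⟩ := hq1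
      have hclosed : CClosed M ((ppNFA M).eval a) := by
        refine ppNFA_evalFrom_closed M ?_ a
        intro s hs s' hss'
        exact CRel.trans' M hs hss'
      exact hclosed q0 hq0 q2 (CRel.key M (CRel.refl' M q0) hc1 hc2)
    have he : (ppNFA M).eval (a ++ pushSym v :: popSym v :: b)
        = (ppNFA M).evalFrom ((ppNFA M).stepSet ((ppNFA M).stepSet ((ppNFA M).eval a)
            (pushSym v)) (popSym v)) b := by
      show (ppNFA M).evalFrom _ _ = _
      rw [NFA.evalFrom_append', NFA.evalFrom_cons', NFA.evalFrom_cons']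
      rfl
    rw [he] at hqe
    have : (ppNFA M).eval (a ++ b) = (ppNFA M).evalFrom ((ppNFA M).eval a) b := by
      show (ppNFA M).evalFrom _ _ = _
      rw [NFA.evalFrom_append']
      rfl
    rw [this]
    exact (ppNFA M).evalFrom_mono' key b hqe

theorem ppNFA_accepts : (ppNFA M).accepts = pushpopCl M.accepts := by
  ext x
  constructor
  · rintro ⟨q, hq, hx⟩
    obtain ⟨q0, hq0, w, hw, hr⟩ := ppNFA_evalFrom_sound M hx
    obtain ⟨d, hd, he⟩ := hq0
    rw [mem_pushpopCl_iff]
    refine ⟨d ++ w, ?_, (Red.null_prefix hd w).trans hr⟩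
    show M.evalFrom M.start (d ++ w) ∈ M.accept
    rw [DFA.evalFrom_of_append, he, hw]
    exact hq
  · intro h
    rw [mem_pushpopCl_iff] at h
    obtain ⟨w, hw, hr⟩ := h
    refine ppNFA_accepts_red_closed M ?_ hr
    exact ⟨M.evalFrom M.start w, hw, ppNFA_evalFrom_complete M w (CRel.refl' M M.start)⟩

end PushPopNFA

section Filter

variable {V : Type}

/-- A 3-state DFA for `PopsThenPushes`. -/
def ptpDFA (V : Type) : DFA (Alph V) (Option Bool) where
  step s a :=
    match s, a with
    | some false, Sum.inr _ => some false
    | some false, Sum.inl _ => some true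
    | some true, Sum.inl _ => some true
    | some true, Sum.inr _ => none
    | none, _ => none
  start := some false
  accept := {s | s ≠ none}

theorem ptpDFA_evalFrom_none (w : List (Alph V)) : (ptpDFA V).evalFrom none w = none := by
  induction w with
  | nil => rfl
  | cons a w ih => cases a <;> exact ih

theorem ptpDFA_pops (p : List V) :
    (ptpDFA V).evalFrom (some false) (p.map popSym) = some false := by
  induction p with
  | nil => rfl
  | cons v p ih => exact ih

theorem ptpDFA_pushes_true (q : List V) :
    (ptpDFA V).evalFrom (some true) (q.map pushSym) = some true := by
  induction q with
  | nil => rfl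
  | cons v q ih => exact ih

theorem ptpDFA_pushes_false (q : List V) :
    (ptpDFA V).evalFrom (some false) (q.map pushSym) ≠ none := by
  cases q with
  | nil => simp [DFA.evalFrom_nil]
  | cons v q =>
    show (ptpDFA V).evalFrom (some true) (q.map pushSym) ≠ none
    rw [ptpDFA_pushes_true]
    simp

theorem ptpDFA_true_shape (w : List (Alph V))
    (h : (ptpDFA V).evalFrom (some true) w ≠ none) : ∃ q : List V, w = q.map pushSym := by
  induction w with
  | nil => exact ⟨[], rfl⟩
  | cons a w ih =>
    cases a with
    | inl v =>
      obtain ⟨q, hq⟩ := ih h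
      exact ⟨v :: q, by simp [hq, pushSym]⟩
    | inr v =>
      exfalso
      exact h (ptpDFA_evalFrom_none w)

theorem ptpDFA_false_shape (w : List (Alph V))
    (h : (ptpDFA V).evalFrom (some false) w ≠ none) : w ∈ PopsThenPushes := by
  induction w with
  | nil => exact ⟨[], [], rfl⟩
  | cons a w ih =>
    cases a with
    | inl v =>
      obtain ⟨q, hq⟩ := ptpDFA_true_shape w h
      exact ⟨[], v :: q, by simp [hq, pushSym]⟩
    | inr v =>
      obtain ⟨p, q, hpq⟩ := ih h
      exact ⟨v :: p, q, by simp [hpq, popSym]⟩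

theorem ptpDFA_accepts : (ptpDFA V).accepts = PopsThenPushes := by
  ext w
  rw [DFA.mem_accepts]
  constructor
  · intro h
    exact ptpDFA_false_shape w h
  · rintro ⟨p, q, rfl⟩
    show (ptpDFA V).evalFrom (some false) _ ∈ _
    rw [DFA.evalFrom_of_append, ptpDFA_pops]
    exact ptpDFA_pushes_false q

/-- Product DFA. -/
def prodDFA {α σ1 σ2 : Type*} (M1 : DFA α σ1) (M2 : DFA α σ2) : DFA α (σ1 × σ2) where
  step s a := (M1.step s.1 a, M2.step s.2 a)
  start := (M1.start, M2.start)
  accept := {s | s.1 ∈ M1.accept ∧ s.2 ∈ M2.accept}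

theorem prodDFA_evalFrom {α σ1 σ2 : Type*} (M1 : DFA α σ1) (M2 : DFA α σ2)
    (s1 : σ1) (s2 : σ2) (x : List α) :
    (prodDFA M1 M2).evalFrom (s1, s2) x = (M1.evalFrom s1 x, M2.evalFrom s2 x) := by
  induction x generalizing s1 s2 with
  | nil => rfl
  | cons a x ih => exact ih _ _

theorem prodDFA_accepts {α σ1 σ2 : Type*} (M1 : DFA α σ1) (M2 : DFA α σ2) :
    (prodDFA M1 M2).accepts = {w | w ∈ M1.accepts ∧ w ∈ M2.accepts} := by
  ext w
  rw [DFA.mem_accepts]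
  show (prodDFA M1 M2).evalFrom (M1.start, M2.start) w ∈ _ ↔ _
  rw [prodDFA_evalFrom]
  rfl

end Filter

section PopPushChar

variable {V : Type}

theorem pp_decomp_unique : ∀ {p p' q q' : List V},
    p.map popSym ++ q.map pushSym = p'.map popSym ++ q'.map pushSym → p = p' ∧ q = q' := by
  intro p
  induction p with
  | nil =>
    intro p' q q' h
    cases p' with
    | nil =>
      simp only [List.map_nil, List.nil_append] at h
      exact ⟨rfl, List.map_injective_iff.mpr (fun a b => Sum.inl.inj) h⟩
    | cons v p' =>
      cases q with
      | nil => simp at h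
      | cons w q => simp [pushSym, popSym] at h
  | cons v p ih =>
    intro p' q q' h
    cases p' with
    | nil =>
      cases q' with
      | nil => simp at h
      | cons w q' => simp [pushSym, popSym] at h
    | cons v' p'' =>
      simp only [List.map_cons, List.cons_append, List.cons.injEq, popSym] at h
      obtain ⟨h1, h2⟩ := h
      obtain ⟨rfl, rfl⟩ := ih h2
      exact ⟨by rw [Sum.inr.inj h1], rfl⟩

theorem poppush_insert (R : Language (Alph V)) (s : List V) :
    ∀ (p q : List V), PopPush R (p.map popSym ++ q.map pushSym) →
    PopPush R ((p ++ s).map popSym ++ (s.reverse ++ q).map pushSym) := by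
  induction s with
  | nil => intro p q h; simpa using h
  | cons v s ih =>
    intro p q h
    have h2 : PopPush R ((p ++ [v]).map popSym ++ (v :: q).map pushSym) := by
      have := PopPush.step (v := v) h
      simpa using this
    have h3 := ih (p ++ [v]) (v :: q) h2
    have e1 : p ++ [v] ++ s = p ++ v :: s := by simp
    have e2 : s.reverse ++ v :: q = (v :: s).reverse ++ q := by simp
    rw [e1, e2] at h3
    exact h3

theorem poppush_char (R : Language (Alph V)) (hR : R ≤ PopsThenPushes) :
    poppushCl R = {w | ∃ p s q : List V,
      (p.map popSym ++ q.map pushSym) ∈ R ∧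
      w = (p ++ s).map popSym ++ (s.reverse ++ q).map pushSym} := by
  ext w
  constructor
  · intro h
    induction h with
    | @base x hx =>
      obtain ⟨p, q, rfl⟩ := hR hx
      exact ⟨p, [], q, hx, by simp⟩
    | @step P Q v h ih =>
      obtain ⟨p, s, q, hbase, heq⟩ := ih
      obtain ⟨hP, hQ⟩ := pp_decomp_unique heq
      refine ⟨p, s ++ [v], q, hbase, ?_⟩
      subst hP hQ
      simp [List.append_assoc, popSym, pushSym]
  · rintro ⟨p, s, q, hbase, rfl⟩
    exact poppush_insert R s p q (PopPush.base hbase)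

theorem takePops_pushes (q : List V) :
    takePops (q.map pushSym : List (Alph V)) = ([], q.map pushSym) := by
  cases q <;> rfl

theorem takePops_pp (p q : List V) :
    takePops (p.map popSym ++ q.map pushSym) = (p, q.map pushSym) := by
  induction p with
  | nil => simpa using takePops_pushes q
  | cons v p ih =>
    show takePops (Sum.inr v :: (p.map popSym ++ q.map pushSym)) = _
    rw [takePops]
    simp [ih]

theorem asPushes_pushes (q : List V) : asPushes (q.map pushSym : List (Alph V)) = some q := by
  induction q with
  | nil => rfl
  | cons v q ih =>
    show asPushes (Sum.inl v :: q.map pushSym) = _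
    rw [asPushes]
    simp [ih]

theorem zipWord_pp (p q : List V) :
    zipWord (p.map popSym ++ q.map pushSym) = some (zipAux p.reverse q) := by
  rw [zipWord, takePops_pp]
  simp [asPushes_pushes]

theorem zipAux_diag (t p q : List V) :
    zipAux (t ++ p) (t ++ q)
      = t.map (fun v => ((some v : Option V), (some v : Option V))) ++ zipAux p q := by
  induction t with
  | nil => rfl
  | cons v t ih => simp [zipAux, ih]

theorem zipLang_char {R : Language (Alph V)} (hR : R ≤ PopsThenPushes) :
    zipLang R = {z | ∃ p q : List V,
      p.map popSym ++ q.map pushSym ∈ R ∧ z = zipAux p.reverse q} := by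
  ext z
  constructor
  · rintro ⟨w, hw, hz⟩
    obtain ⟨p, q, rfl⟩ := hR hw
    rw [zipWord_pp] at hz
    exact ⟨p, q, hw, (Option.some.inj hz).symm⟩
  · rintro ⟨p, q, h, rfl⟩
    exact ⟨_, h, zipWord_pp p q⟩

end PopPushChar

section ZipNFA

theorem zipAux_nil_nil {V : Type} : zipAux ([] : List V) [] = [] := by rw [zipAux]
theorem zipAux_cons_nil {V : Type} (v : V) (p : List V) :
    zipAux (v :: p) [] = (some v, none) :: zipAux p [] := by rw [zipAux]
theorem zipAux_nil_cons {V : Type} (w : V) (q : List V) :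
    zipAux ([] : List V) (w :: q) = (none, some w) :: zipAux [] q := by rw [zipAux]
theorem zipAux_cons_cons {V : Type} (v w : V) (p q : List V) :
    zipAux (v :: p) (w :: q) = (some v, some w) :: zipAux p q := by rw [zipAux]

variable {V : Type} {τ : Type} (M2 : DFA (Alph V) τ)

/-- Backward simulation of the pop track. -/
def stepA : Option τ → Option V → Set (Option τ)
  | some a, some v => {x' | ∃ a', x' = some a' ∧ M2.step a' (popSym v) = a}
  | some a, none => {x' | x' = none ∧ a = M2.start}
  | none, some _ => ∅
  | none, none => {none}

/-- Forward simulation of the push track. -/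
def stepB : Option τ → Option V → Set (Option τ)
  | some b, some w => {some (M2.step b (pushSym w))}
  | some b, none => {y' | y' = none ∧ b ∈ M2.accept}
  | none, some _ => ∅
  | none, none => {none}

/-- NFA for `zipLang M2.accepts` (when `M2.accepts` consists of pops-then-pushes words). -/
def zipNFA : NFA (ZAlph V) (Option τ × Option τ) where
  step s c := {s' | ¬(c.1 = none ∧ c.2 = none) ∧ s'.1 ∈ stepA M2 s.1 c.1 ∧ s'.2 ∈ stepB M2 s.2 c.2}
  start := {s | ∃ m, s = (some m, some m)}
  accept := {s | (s.1 = none ∨ s.1 = some M2.start) ∧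
    (s.2 = none ∨ ∃ b ∈ M2.accept, s.2 = some b)}

/-- Invariant for the pop track. -/
def AInv (p' : List V) (x : Option τ) : Prop :=
  (∃ a, x = some a ∧ M2.evalFrom M2.start (p'.reverse.map popSym) = a) ∨ (x = none ∧ p' = [])

/-- Invariant for the push track. -/
def BInv (q : List V) (y : Option τ) : Prop :=
  (∃ b, y = some b ∧ M2.evalFrom b (q.map pushSym) ∈ M2.accept) ∨ (y = none ∧ q = [])

theorem zip_fwd : ∀ (p' q : List V) (x y : Option τ), AInv M2 p' x → BInv M2 q y →
    ∃ s ∈ (zipNFA M2).accept, s ∈ (zipNFA M2).evalFrom {(x, y)} (zipAux p' q) := by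
  intro p'
  induction p' with
  | nil =>
    intro q
    induction q with
    | nil =>
      intro x y hA hB
      refine ⟨(x, y), ⟨?_, ?_⟩, by rw [zipAux_nil_nil]; exact Set.mem_singleton _⟩
      · rcases hA with ⟨a, rfl, ha⟩ | ⟨rfl, -⟩
        · right
          show some a = some M2.start
          rw [← ha, List.reverse_nil, List.map_nil, DFA.evalFrom_nil]
        · left; rfl
      · rcases hB with ⟨b, rfl, hb⟩ | ⟨rfl, -⟩
        · right; exact ⟨b, hb, rfl⟩
        · left; rfl
    | cons w q'' ih =>
      intro x y hA hB
      rcases hB with ⟨b, rfl, hb⟩ | ⟨rfl, hq⟩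
      swap
      · exact absurd hq (by simp)
      have hx' : (none : Option τ) ∈ stepA M2 x none := by
        rcases hA with ⟨a, rfl, ha⟩ | ⟨rfl, -⟩
        · exact ⟨rfl, by rw [← ha, List.reverse_nil, List.map_nil, DFA.evalFrom_nil]⟩
        · exact rfl
      have hy' : (some (M2.step b (pushSym w)) : Option τ) ∈ stepB M2 (some b) (some w) := rfl
      have hstep : ((none : Option τ), some (M2.step b (pushSym w)))
          ∈ (zipNFA M2).step (x, some b) (none, some w) := ⟨by simp, hx', hy'⟩
      obtain ⟨s, hacc, hmem⟩ := ih none (some (M2.step b (pushSym w)))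
        (Or.inr ⟨rfl, rfl⟩) (Or.inl ⟨_, rfl, hb⟩)
      rw [zipAux_nil_cons]
      exact ⟨s, hacc, (zipNFA M2).step_compose' rfl hstep hmem⟩
  | cons v p'' ih =>
    intro q x y hA hB
    rcases hA with ⟨a, rfl, ha⟩ | ⟨-, h⟩
    swap
    · exact absurd h (by simp)
    have hastep : M2.step (M2.evalFrom M2.start (p''.reverse.map popSym)) (popSym v) = a := by
      rw [← ha, List.reverse_cons, List.map_append, DFA.evalFrom_of_append]
      rfl
    have hx' : (some (M2.evalFrom M2.start (p''.reverse.map popSym)) : Option τ)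
        ∈ stepA M2 (some a) (some v) := ⟨_, rfl, hastep⟩
    cases q with
    | nil =>
      rcases hB with ⟨b, rfl, hb⟩ | ⟨rfl, -⟩
      · have hy' : (none : Option τ) ∈ stepB M2 (some b) none := ⟨rfl, by simpa using hb⟩
        have hstep : ((some (M2.evalFrom M2.start (p''.reverse.map popSym)) : Option τ),
            (none : Option τ)) ∈ (zipNFA M2).step (some a, some b) (some v, none) :=
          ⟨by simp, hx', hy'⟩
        obtain ⟨s, hacc, hmem⟩ := ih [] (some (M2.evalFrom M2.start (p''.reverse.map popSym)))
          none (Or.inl ⟨_, rfl, rfl⟩) (Or.inr ⟨rfl, rfl⟩)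
        rw [zipAux_cons_nil]
        exact ⟨s, hacc, (zipNFA M2).step_compose' rfl hstep hmem⟩
      · have hy' : (none : Option τ) ∈ stepB M2 none none := rfl
        have hstep : ((some (M2.evalFrom M2.start (p''.reverse.map popSym)) : Option τ),
            (none : Option τ)) ∈ (zipNFA M2).step (some a, none) (some v, none) :=
          ⟨by simp, hx', hy'⟩
        obtain ⟨s, hacc, hmem⟩ := ih [] (some (M2.evalFrom M2.start (p''.reverse.map popSym)))
          none (Or.inl ⟨_, rfl, rfl⟩) (Or.inr ⟨rfl, rfl⟩)
        rw [zipAux_cons_nil]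
        exact ⟨s, hacc, (zipNFA M2).step_compose' rfl hstep hmem⟩
    | cons w q'' =>
      rcases hB with ⟨b, rfl, hb⟩ | ⟨-, h⟩
      swap
      · exact absurd h (by simp)
      have hy' : (some (M2.step b (pushSym w)) : Option τ) ∈ stepB M2 (some b) (some w) := rfl
      have hstep : ((some (M2.evalFrom M2.start (p''.reverse.map popSym)) : Option τ),
          some (M2.step b (pushSym w))) ∈ (zipNFA M2).step (some a, some b) (some v, some w) :=
        ⟨by simp, hx', hy'⟩
      obtain ⟨s, hacc, hmem⟩ := ih q'' (some (M2.evalFrom M2.start (p''.reverse.map popSym)))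
        (some (M2.step b (pushSym w))) (Or.inl ⟨_, rfl, rfl⟩) (Or.inl ⟨_, rfl, hb⟩)
      rw [zipAux_cons_cons]
      exact ⟨s, hacc, (zipNFA M2).step_compose' rfl hstep hmem⟩

theorem zip_bwd : ∀ (z : List (ZAlph V)) (x y : Option τ),
    (∃ s ∈ (zipNFA M2).evalFrom {(x, y)} z, s ∈ (zipNFA M2).accept) →
    ∃ p' q : List V, z = zipAux p' q ∧ AInv M2 p' x ∧ BInv M2 q y := by
  intro z
  induction z with
  | nil =>
    rintro x y ⟨s, hs, hacc⟩
    rw [NFA.evalFrom_nil] at hs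
    cases Set.mem_singleton_iff.mp hs
    obtain ⟨h1, h2⟩ := hacc
    refine ⟨[], [], zipAux_nil_nil.symm, ?_, ?_⟩
    · rcases h1 with h1 | h1
      · exact Or.inr ⟨h1, rfl⟩
      · exact Or.inl ⟨M2.start, h1, rfl⟩
    · rcases h2 with h2 | ⟨b, hb, h2⟩
      · exact Or.inr ⟨h2, rfl⟩
      · exact Or.inl ⟨b, h2, by simpa using hb⟩
  | cons c z ih =>
    rintro x y ⟨s, hs, hacc⟩
    rw [NFA.evalFrom_cons', NFA.mem_evalFrom_iff'] at hs
    obtain ⟨s1, hs1, hsz⟩ := hs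
    rw [NFA.mem_stepSet] at hs1
    obtain ⟨s0, hs0, hstep⟩ := hs1
    cases Set.mem_singleton_iff.mp hs0
    obtain ⟨x1, y1⟩ := s1
    obtain ⟨c1, c2⟩ := c
    obtain ⟨p'', q', hz, hA1, hB1⟩ := ih x1 y1 ⟨s, hsz, hacc⟩
    obtain ⟨hcc, hxs, hys⟩ : ¬(c1 = none ∧ c2 = none) ∧
        x1 ∈ stepA M2 x c1 ∧ y1 ∈ stepB M2 y c2 := hstep
    have hApart : ∃ p' : List V, AInv M2 p' x ∧
        ((c1 = none ∧ p' = [] ∧ p'' = []) ∨ (∃ v, c1 = some v ∧ p' = v :: p'')) := by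
      cases c1 with
      | none =>
        have hx1 : x1 = none := by
          cases x with
          | none => exact Set.mem_singleton_iff.mp hxs
          | some a => exact hxs.1
        subst hx1
        have hp'' : p'' = [] := by
          rcases hA1 with ⟨a, h, -⟩ | ⟨-, h⟩
          · exact absurd h (by simp)
          · exact h
        refine ⟨[], ?_, Or.inl ⟨rfl, rfl, hp''⟩⟩
        cases x with
        | none => exact Or.inr ⟨rfl, rfl⟩
        | some a => exact Or.inl ⟨a, rfl, by rw [hxs.2]; rfl⟩
      | some v =>
        cases x with
        | none => exact absurd hxs (Set.notMem_empty _)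
        | some a =>
          obtain ⟨a', hx1, hstepa⟩ := hxs
          subst hx1
          rcases hA1 with ⟨a'', ha'', heval⟩ | ⟨h, -⟩
          · cases Option.some.inj ha''
            refine ⟨v :: p'', Or.inl ⟨a, rfl, ?_⟩, Or.inr ⟨v, rfl, rfl⟩⟩
            rw [List.reverse_cons, List.map_append, DFA.evalFrom_of_append, heval]
            exact hstepa
          · exact absurd h (by simp)
    have hBpart : ∃ q : List V, BInv M2 q y ∧
        ((c2 = none ∧ q = [] ∧ q' = []) ∨ (∃ w, c2 = some w ∧ q = w :: q')) := by
      cases c2 with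
      | none =>
        have hy1 : y1 = none := by
          cases y with
          | none => exact Set.mem_singleton_iff.mp hys
          | some b => exact hys.1
        subst hy1
        have hq' : q' = [] := by
          rcases hB1 with ⟨b, h, -⟩ | ⟨-, h⟩
          · exact absurd h (by simp)
          · exact h
        refine ⟨[], ?_, Or.inl ⟨rfl, rfl, hq'⟩⟩
        cases y with
        | none => exact Or.inr ⟨rfl, rfl⟩
        | some b => exact Or.inl ⟨b, rfl, by simpa using hys.2⟩
      | some w =>
        cases y with
        | none => exact absurd hys (Set.notMem_empty _)
        | some b =>
          have hy1 : y1 = some (M2.step b (pushSym w)) := Set.mem_singleton_iff.mp hys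
          subst hy1
          rcases hB1 with ⟨b', hb', heval⟩ | ⟨h, -⟩
          · cases Option.some.inj hb'
            exact ⟨w :: q', Or.inl ⟨b, rfl, heval⟩, Or.inr ⟨w, rfl, rfl⟩⟩
          · exact absurd h (by simp)
    obtain ⟨p', hAx, hc1⟩ := hApart
    obtain ⟨q, hBy, hc2⟩ := hBpart
    refine ⟨p', q, ?_, hAx, hBy⟩
    subst hz
    rcases hc1 with ⟨rfl, rfl, rfl⟩ | ⟨v, rfl, rfl⟩ <;>
      rcases hc2 with ⟨rfl, rfl, rfl⟩ | ⟨w, rfl, rfl⟩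
    · exact absurd ⟨rfl, rfl⟩ hcc
    · rw [zipAux_nil_cons]
    · rw [zipAux_cons_nil]
    · rw [zipAux_cons_cons]

theorem zipNFA_accepts (hR2 : M2.accepts ≤ PopsThenPushes) :
    (zipNFA M2).accepts = zipLang M2.accepts := by
  ext z
  constructor
  · rintro ⟨s, hacc, hz⟩
    rw [NFA.eval, NFA.mem_evalFrom_iff'] at hz
    obtain ⟨s0, ⟨m, rfl⟩, hmem⟩ := hz
    obtain ⟨p', q, hzeq, hA, hB⟩ := zip_bwd M2 z (some m) (some m) ⟨s, hmem, hacc⟩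
    rcases hA with ⟨a, ha, heval⟩ | ⟨h, -⟩
    swap
    · exact absurd h (by simp)
    cases Option.some.inj ha
    rcases hB with ⟨b, hb, haccb⟩ | ⟨h, -⟩
    swap
    · exact absurd h (by simp)
    cases Option.some.inj hb
    refine ⟨p'.reverse.map popSym ++ q.map pushSym, ?_, ?_⟩
    · show M2.evalFrom M2.start _ ∈ M2.accept
      rw [DFA.evalFrom_of_append, heval]
      exact haccb
    · rw [zipWord_pp, List.reverse_reverse, hzeq]
  · rintro ⟨w, hw, hzw⟩
    obtain ⟨p, q, rfl⟩ := hR2 hw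
    rw [zipWord_pp] at hzw
    cases Option.some.inj hzw
    have hm : M2.evalFrom M2.start ((p.reverse).reverse.map popSym)
        = M2.evalFrom M2.start (p.map popSym) := by rw [List.reverse_reverse]
    obtain ⟨s, hacc, hmem⟩ := zip_fwd M2 p.reverse q
      (some (M2.evalFrom M2.start (p.map popSym)))
      (some (M2.evalFrom M2.start (p.map popSym)))
      (Or.inl ⟨_, rfl, hm⟩)
      (Or.inl ⟨_, rfl, by rw [← DFA.evalFrom_of_append]; exact hw⟩)
    refine ⟨s, hacc, ?_⟩
    exact (zipNFA M2).evalFrom_mono'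
      (by rintro u hu; cases Set.mem_singleton_iff.mp hu; exact ⟨_, rfl⟩) _ hmem

end ZipNFA

section DiagNFA

variable {V : Type} {ρ : Type} (M1 : DFA (ZAlph V) ρ)

/-- Words consisting only of diagonal letters `(some v, some v)`. -/
def DiagOnly (z : List (ZAlph V)) : Prop := ∀ c ∈ z, ∃ v : V, c = (some v, some v)

/-- NFA for `DiagOnly-prefix ++ M1.accepts`. -/
def diagNFA : NFA (ZAlph V) (Option ρ) where
  step s c :=
    match s with
    | none => {some (M1.step M1.start c)} ∪ {x | x = none ∧ ∃ v, c = (some v, some v)}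
    | some r => {some (M1.step r c)}
  start := {none}
  accept := {s | (∃ r ∈ M1.accept, s = some r) ∨ (s = none ∧ [] ∈ M1.accepts)}

theorem diagNFA_S1 {z1 : List (ZAlph V)} (h : DiagOnly z1) :
    (none : Option ρ) ∈ (diagNFA M1).evalFrom {none} z1 := by
  induction z1 with
  | nil => exact rfl
  | cons c z1 ih =>
    refine (diagNFA M1).step_compose' rfl ?_ (ih fun c hc => h c (List.mem_cons_of_mem _ hc))
    exact Or.inr ⟨rfl, h c (List.mem_cons_self)⟩

theorem diagNFA_S3 (z : List (ZAlph V)) : ∀ r : ρ,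
    some (M1.evalFrom r z) ∈ (diagNFA M1).evalFrom {some r} z := by
  induction z with
  | nil => intro r; exact rfl
  | cons c z ih =>
    intro r
    exact (diagNFA M1).step_compose' rfl rfl (ih (M1.step r c))

theorem diagNFA_B1 : ∀ (z : List (ZAlph V)) (r : ρ),
    (∃ t ∈ (diagNFA M1).evalFrom {some r} z, t ∈ (diagNFA M1).accept) →
    M1.evalFrom r z ∈ M1.accept := by
  intro z
  induction z with
  | nil =>
    rintro r ⟨t, ht, hacc⟩
    cases Set.mem_singleton_iff.mp ht
    rcases hacc with ⟨r', hr', heq⟩ | ⟨h, -⟩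
    · cases Option.some.inj heq; exact hr'
    · exact absurd h (by simp)
  | cons c z ih =>
    rintro r ⟨t, ht, hacc⟩
    rw [NFA.evalFrom_cons', NFA.mem_evalFrom_iff'] at ht
    obtain ⟨s1, hs1, htz⟩ := ht
    rw [NFA.mem_stepSet] at hs1
    obtain ⟨s0, hs0, hstep⟩ := hs1
    cases Set.mem_singleton_iff.mp hs0
    have hs1' : s1 = some (M1.step r c) := Set.mem_singleton_iff.mp hstep
    subst hs1'
    exact ih (M1.step r c) ⟨t, htz, hacc⟩

theorem diagNFA_B2 : ∀ z : List (ZAlph V),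
    (∃ t ∈ (diagNFA M1).evalFrom {none} z, t ∈ (diagNFA M1).accept) →
    ∃ z1 z2, z = z1 ++ z2 ∧ DiagOnly z1 ∧ z2 ∈ M1.accepts := by
  intro z
  induction z with
  | nil =>
    rintro ⟨t, ht, hacc⟩
    cases Set.mem_singleton_iff.mp ht
    rcases hacc with ⟨r', -, heq⟩ | ⟨-, h⟩
    · exact absurd heq (by simp)
    · exact ⟨[], [], rfl, fun c hc => absurd hc (List.not_mem_nil), h⟩
  | cons c z ih =>
    rintro ⟨t, ht, hacc⟩
    rw [NFA.evalFrom_cons', NFA.mem_evalFrom_iff'] at ht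
    obtain ⟨s1, hs1, htz⟩ := ht
    rw [NFA.mem_stepSet] at hs1
    obtain ⟨s0, hs0, hstep⟩ := hs1
    cases Set.mem_singleton_iff.mp hs0
    rcases hstep with hL | ⟨rfl, hdiag⟩
    · have hs1' : s1 = some (M1.step M1.start c) := Set.mem_singleton_iff.mp hL
      subst hs1'
      have := diagNFA_B1 M1 z (M1.step M1.start c) ⟨t, htz, hacc⟩
      exact ⟨[], c :: z, rfl, fun c hc => absurd hc (List.not_mem_nil), this⟩
    · obtain ⟨z1, z2, rfl, hd, hm⟩ := ih ⟨t, htz, hacc⟩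
      refine ⟨c :: z1, z2, rfl, ?_, hm⟩
      intro c' hc'
      rcases List.mem_cons.mp hc' with rfl | h
      · exact hdiag
      · exact hd c' h

theorem diagNFA_accepts :
    (diagNFA M1).accepts = {z | ∃ z1 z2, z = z1 ++ z2 ∧ DiagOnly z1 ∧ z2 ∈ M1.accepts} := by
  ext z
  constructor
  · rintro ⟨t, hacc, ht⟩
    exact diagNFA_B2 M1 z ⟨t, ht, hacc⟩
  · rintro ⟨z1, z2, rfl, hd, hm⟩
    cases z2 with
    | nil =>
      refine ⟨none, Or.inr ⟨rfl, by simpa using hm⟩, ?_⟩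
      show _ ∈ (diagNFA M1).evalFrom {none} _
      rw [List.append_nil]
      exact diagNFA_S1 M1 hd
    | cons c z2' =>
      refine ⟨some (M1.evalFrom (M1.step M1.start c) z2'), Or.inl ⟨_, hm, rfl⟩, ?_⟩
      show _ ∈ (diagNFA M1).evalFrom {none} _
      rw [NFA.evalFrom_append']
      exact (diagNFA M1).step_compose' (diagNFA_S1 M1 hd) (Or.inl rfl)
        (diagNFA_S3 M1 z2' (M1.step M1.start c))

theorem diagOnly_map {z1 : List (ZAlph V)} (h : DiagOnly z1) :
    ∃ t : List V, z1 = t.map (fun v => ((some v : Option V), (some v : Option V))) := by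
  induction z1 with
  | nil => exact ⟨[], rfl⟩
  | cons c z1 ih =>
    obtain ⟨v, rfl⟩ := h c (List.mem_cons_self)
    obtain ⟨t, rfl⟩ := ih fun c hc => h c (List.mem_cons_of_mem _ hc)
    exact ⟨v :: t, rfl⟩

theorem diagOnly_of_map (t : List V) :
    DiagOnly (t.map (fun v => ((some v : Option V), (some v : Option V)))) := by
  intro c hc
  rw [List.mem_map] at hc
  obtain ⟨v, -, rfl⟩ := hc
  exact ⟨v, rfl⟩

end DiagNFA

/-- If `L` is regular over the push-pop alphabet, then
`zip(poppush(filter(pushpop(L))))` is regular over the zipped alphabet. -/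
theorem stmt8 {V : Type} [Fintype V] [Nonempty V] (L : Language (Alph V))
    (hL : L.IsRegular) :
    (zipLang (poppushCl (filterL (pushpopCl L)))).IsRegular := by
  obtain ⟨σ, fσ, M, hM⟩ := hL
  -- DFA for pushpopCl L
  let MK : DFA (Alph V) (Set σ) := (ppNFA M).toDFA
  have hK : MK.accepts = pushpopCl L := by
    show (ppNFA M).toDFA.accepts = _
    rw [NFA.toDFA_correct, ppNFA_accepts, hM]
  -- DFA for filterL (pushpopCl L)
  let M2 : DFA (Alph V) (Set σ × Option Bool) := prodDFA MK (ptpDFA V)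
  have hM2 : M2.accepts = filterL (pushpopCl L) := by
    show (prodDFA MK (ptpDFA V)).accepts = _
    rw [prodDFA_accepts, hK, ptpDFA_accepts]
    rfl
  set R2 : Language (Alph V) := filterL (pushpopCl L) with hR2def
  have hsub : M2.accepts ≤ PopsThenPushes := by
    rw [hM2]
    rintro w ⟨-, h⟩
    exact h
  have hR2sub : R2 ≤ PopsThenPushes := by rintro w ⟨-, h⟩; exact h
  -- DFA for zipLang R2
  let M1 : DFA (ZAlph V) (Set (Option (Set σ × Option Bool) × Option (Set σ × Option Bool))) :=
    (zipNFA M2).toDFA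
  have hM1 : M1.accepts = zipLang R2 := by
    show (zipNFA M2).toDFA.accepts = _
    rw [NFA.toDFA_correct, zipNFA_accepts M2 hsub, hM2]
  -- poppushCl R2 is contained in PopsThenPushes
  have hpp : poppushCl R2 ≤ PopsThenPushes := by
    rw [poppush_char R2 hR2sub]
    rintro w ⟨p, s, q, -, rfl⟩
    exact ⟨p ++ s, s.reverse ++ q, rfl⟩
  refine ⟨_, inferInstance, (diagNFA M1).toDFA, ?_⟩
  rw [NFA.toDFA_correct, diagNFA_accepts]
  ext z
  rw [zipLang_char hpp]
  constructor
  · rintro ⟨z1, z2, rfl, hd, hm⟩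
    obtain ⟨t, rfl⟩ := diagOnly_map hd
    rw [hM1, zipLang_char hR2sub] at hm
    obtain ⟨p, q, hbase, rfl⟩ := hm
    refine ⟨p ++ t.reverse, t.reverse.reverse ++ q, ?_, ?_⟩
    · rw [poppush_char R2 hR2sub]
      exact ⟨p, t.reverse, q, hbase, rfl⟩
    · rw [List.reverse_append, List.reverse_reverse, zipAux_diag]
  · rintro ⟨P, Q, hmem, rfl⟩
    rw [poppush_char R2 hR2sub] at hmem
    obtain ⟨p, s, q, hbase, heq⟩ := hmem
    obtain ⟨rfl, rfl⟩ := pp_decomp_unique heq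
    refine ⟨s.reverse.map (fun v => ((some v : Option V), (some v : Option V))),
      zipAux p.reverse q, ?_, diagOnly_of_map s.reverse, ?_⟩
    · rw [List.reverse_append, zipAux_diag]
    · rw [hM1, zipLang_char hR2sub]
      exact ⟨p, q, hbase, rfl⟩
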